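/- (Algebraic Chebyshev inequality.) Let A be a commutative unital C*-algebra and ω a state on A, and let ε > 0. (i) If y ∈ A with y ≥ 0, then every element e of the closed ideal of A generated by (y − ε·1)₊ satisfying 0 ≤ e ≤ 1 obeys ε·ω(e) ≤ ω(y). (ii) If x ∈ A is self-adjoint and μ = ω(x) (a real number), then every element e of the closed ideal of A generated by ((x − μ·1)² − ε²·1)₊ satisfying 0 ≤ e ≤ 1 obeys ε²·ω(e) ≤ ω((x − μ·1)²). -/

import Mathlib

open scoped ComplexOrder

private lemma comm_mul_nonneg {A : Type*} [CommCStarAlgebra A] [PartialOrder A]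
    [StarOrderedRing A] {a b : A} (ha : 0 ≤ a) (hb : 0 ≤ b) : 0 ≤ a * b := by
  have h := star_left_conjugate_nonneg ha (CFC.sqrt b)
  rwa [(IsSelfAdjoint.of_nonneg (CFC.sqrt_nonneg b)).star_eq, mul_comm (CFC.sqrt b) a,
    mul_assoc, CFC.sqrt_mul_sqrt_self b hb] at h

private lemma chebyshev_key {A : Type*} [CommCStarAlgebra A] [PartialOrder A]
    [StarOrderedRing A] (ω : A →ₗ[ℂ] ℂ) (hωpos : ∀ a : A, 0 ≤ a → 0 ≤ ω a)
    (ε : ℝ) (y : A) (hy : 0 ≤ y)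
    (e : A) (he : e ∈ closure (Ideal.span {(y - ε • 1)⁺} : Set A))
    (he0 : 0 ≤ e) (he1 : e ≤ 1) :
    (ε : ℂ) * ω e ≤ ω y := by
  set a := y - ε • 1 with ha
  have hysa : IsSelfAdjoint y := .of_nonneg hy
  have hasa : IsSelfAdjoint a := hysa.sub ((IsSelfAdjoint.all ε).smul (IsSelfAdjoint.one A))
  -- `a⁻` annihilates everything in the closed ideal generated by `a⁺`
  have hkill : a⁻ * e = 0 := by
    have hclosed : IsClosed {z : A | a⁻ * z = 0} :=
      isClosed_singleton.preimage (continuous_mul_left a⁻)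
    have hsub : (Ideal.span {a⁺} : Set A) ⊆ {z : A | a⁻ * z = 0} := by
      intro z hz
      obtain ⟨c, rfl⟩ := Ideal.mem_span_singleton'.mp hz
      show a⁻ * (c * a⁺) = 0
      rw [mul_comm c, ← mul_assoc, CFC.negPart_mul_posPart, zero_mul]
    exact closure_minimal hsub hclosed he
  have h1 : 0 ≤ e * a := by
    have heq : e * a = e * a⁺ := by
      nth_rw 1 [← CFC.posPart_sub_negPart a hasa]
      rw [mul_sub, mul_comm e a⁻, hkill, sub_zero]
    rw [heq]
    exact comm_mul_nonneg he0 (CFC.posPart_nonneg a)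
  have h2 : 0 ≤ (1 - e) * y := comm_mul_nonneg (by simpa using he1) hy
  have hle : ε • e ≤ y := by
    have hsum : y - ε • e = e * a + (1 - e) * y := by
      rw [ha, mul_sub, sub_mul, mul_smul_comm, mul_one, one_mul]
      abel
    have := add_nonneg h1 h2
    rw [← hsum, sub_nonneg] at this
    exact this
  have hfin := hωpos _ (sub_nonneg.mpr hle)
  rw [map_sub, LinearMap.map_smul_of_tower, sub_nonneg] at hfin
  rwa [← Complex.real_smul]

theorem chebyshev_inequality (A : Type*) [CommCStarAlgebra A]
    [PartialOrder A] [StarOrderedRing A]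
    (ω : A →ₗ[ℂ] ℂ) (hω1 : ω 1 = 1) (hωpos : ∀ a : A, 0 ≤ a → 0 ≤ ω a)
    (ε : ℝ) (hε : 0 < ε) :
    (∀ y : A, 0 ≤ y →
      ∀ e ∈ closure (Ideal.span {(y - ε • 1)⁺} : Set A), 0 ≤ e → e ≤ 1 →
        (ε : ℂ) * ω e ≤ ω y) ∧
    (∀ x : A, IsSelfAdjoint x →
      ∀ e ∈ closure (Ideal.span {((x - ω x • 1) ^ 2 - (ε ^ 2 : ℝ) • 1)⁺} : Set A),
        0 ≤ e → e ≤ 1 → (ε ^ 2 : ℂ) * ω e ≤ ω ((x - ω x • 1) ^ 2)) := by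
  constructor
  · exact fun y hy e he he0 he1 => chebyshev_key ω hωpos ε y hy e he he0 he1
  · intro x hx e he he0 he1
    -- `ω x` is real since `x` is self-adjoint
    have hreal : (starRingEnd ℂ) (ω x) = ω x := by
      have hdec : ω x = ω x⁺ - ω x⁻ := by
        rw [← map_sub, CFC.posPart_sub_negPart x hx]
      have hp := hωpos _ (CFC.posPart_nonneg x)
      have hn := hωpos _ (CFC.negPart_nonneg x)
      rw [Complex.nonneg_iff] at hp hn
      rw [hdec, map_sub, Complex.conj_eq_iff_im.mpr hp.2.symm, Complex.conj_eq_iff_im.mpr hn.2.symm]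
    have hsa : IsSelfAdjoint (x - ω x • 1) := by
      rw [IsSelfAdjoint, star_sub, hx.star_eq, star_smul, star_one, RCLike.star_def, hreal]
    have hy : 0 ≤ (x - ω x • 1) ^ 2 := by
      have := star_mul_self_nonneg (x - ω x • 1)
      rwa [hsa.star_eq, ← pow_two] at this
    have := chebyshev_key ω hωpos (ε ^ 2) _ hy e he he0 he1
    rwa [Complex.ofReal_pow] at this
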